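/- If d = √(2πσ² ln(19/(9β))) · ln(1/(1−ε)) with 0 < ε < 1, 0 < β ≤ 1, σ > 0, and n ≥ 1/(4πσ² ln²(1−ε)), then 2 e^{−2nd²}/(1 − e^{−8nd²}) ≤ β. -/
import Mathlib


open Real

set_option maxHeartbeats 1000000 in
theorem ks_tail_bound (σ ε β d n : ℝ) (hσ : 0 < σ) (hε0 : 0 < ε) (hε1 : ε < 1)
    (hβ0 : 0 < β) (hβ1 : β ≤ 1)
    (hd : d = Real.sqrt (2 * Real.pi * σ ^ 2 * Real.log (19 / (9 * β)))
            * Real.log (1 / (1 - ε)))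
    (hn : n ≥ 1 / (4 * Real.pi * σ ^ 2 * (Real.log (1 - ε)) ^ 2)) :
    2 * Real.exp (-(2 * n * d ^ 2)) / (1 - Real.exp (-(8 * n * d ^ 2))) ≤ β := by
  have hπ := Real.pi_pos
  have hσ2 : (0:ℝ) < σ ^ 2 := by positivity
  have h1ε : (0:ℝ) < 1 - ε := by linarith
  have hL : Real.log (1 - ε) < 0 := Real.log_neg h1ε (by linarith)
  have hL2 : (0:ℝ) < (Real.log (1 - ε)) ^ 2 := by nlinarith
  have hx : (1:ℝ) ≤ 19 / (9 * β) := by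
    rw [le_div_iff₀ (by linarith)]; linarith
  have hlogx : 0 ≤ Real.log (19 / (9 * β)) := Real.log_nonneg hx
  have hXnn : 0 ≤ 2 * Real.pi * σ ^ 2 * Real.log (19 / (9 * β)) := by positivity
  have hlog1 : Real.log (1 / (1 - ε)) = - Real.log (1 - ε) := by
    rw [one_div, Real.log_inv]
  have hd2 : d ^ 2 = 2 * Real.pi * σ ^ 2 * Real.log (19 / (9 * β))
      * (Real.log (1 - ε)) ^ 2 := by
    rw [hd, mul_pow, Real.sq_sqrt hXnn, hlog1]; ring
  have hden : (0:ℝ) < 4 * Real.pi * σ ^ 2 * (Real.log (1 - ε)) ^ 2 := by positivity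
  have hnpos : 0 < n := lt_of_lt_of_le (by positivity) hn
  have hkey : Real.log (19 / (9 * β)) ≤ 2 * n * d ^ 2 := by
    have h1 : 1 / (4 * Real.pi * σ ^ 2 * (Real.log (1 - ε)) ^ 2) ≤ n := hn
    have h2 : 1 ≤ n * (4 * Real.pi * σ ^ 2 * (Real.log (1 - ε)) ^ 2) := by
      rw [div_le_iff₀ hden] at h1; linarith
    rw [hd2]
    nlinarith [mul_le_mul_of_nonneg_left h2 hlogx]
  set t := Real.exp (-(2 * n * d ^ 2)) with ht
  have ht0 : 0 < t := Real.exp_pos _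
  have htle : t ≤ 9 * β / 19 := by
    have : t ≤ Real.exp (-(Real.log (19 / (9 * β)))) :=
      Real.exp_le_exp.mpr (by linarith)
    rw [Real.exp_neg, Real.exp_log (by positivity)] at this
    calc t ≤ (19 / (9 * β))⁻¹ := this
      _ = 9 * β / 19 := by field_simp
  have h4 : Real.exp (-(8 * n * d ^ 2)) = t ^ 4 := by
    rw [ht, ← Real.exp_nat_mul]
    norm_num
    ring_nf
  have ht1 : t < 1 := by nlinarith
  have hden4 : 0 < 1 - t ^ 4 := by nlinarith [pow_pos ht0 4, pow_lt_one₀ ht0.le ht1 (by norm_num : (4:ℕ) ≠ 0)]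
  rw [h4, div_le_iff₀ hden4]
  have ht419 : t ^ 4 ≤ 1 / 19 := by
    have h1 : t ≤ 9 / 19 := le_trans htle (by nlinarith)
    have h2 : t ^ 4 ≤ (9/19:ℝ) ^ 4 := by
      apply pow_le_pow_left₀ ht0.le h1
    have : ((9:ℝ)/19) ^ 4 ≤ 1/19 := by norm_num
    linarith
  have hb4 : β * t ^ 4 ≤ β * (1/19) := mul_le_mul_of_nonneg_left ht419 hβ0.le
  nlinarith
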